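/- Let α, N, k be natural numbers and let 𝔄 = (g_1,…,g_k) be a multiple colligation of size (α,N,k) in which every g_j is a unitary matrix. Let S be an invertible k×k matrix such that both S̃ − d̃ and T̃ − d̃ are invertible, where T = (S*)⁻¹. Then the following Riemann–Schwarz type identity holds: χ(𝔄; (S*)⁻¹) · (χ(𝔄; S))* = 1, i.e. χ(𝔄; (S*)⁻¹) is the inverse of the conjugate transpose of χ(𝔄; S). -/
import Mathlib


open Matrix

/-- Block-diagonal matrix `ã` of the `a`-blocks of a multiple colligation. -/
noncomputable def aT {k : ℕ} {A I : Type*} [DecidableEq (Fin k)]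
    (g : Fin k → Matrix (A ⊕ I) (A ⊕ I) ℂ) : Matrix (A × Fin k) (A × Fin k) ℂ :=
  blockDiagonal fun j => (g j).toBlocks₁₁

/-- Block-diagonal matrix `b̃` of the `b`-blocks of a multiple colligation. -/
noncomputable def bT {k : ℕ} {A I : Type*}
    (g : Fin k → Matrix (A ⊕ I) (A ⊕ I) ℂ) : Matrix (A × Fin k) (I × Fin k) ℂ :=
  blockDiagonal fun j => (g j).toBlocks₁₂

/-- Block-diagonal matrix `c̃` of the `c`-blocks of a multiple colligation. -/
noncomputable def cT {k : ℕ} {A I : Type*}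
    (g : Fin k → Matrix (A ⊕ I) (A ⊕ I) ℂ) : Matrix (I × Fin k) (A × Fin k) ℂ :=
  blockDiagonal fun j => (g j).toBlocks₂₁

/-- Block-diagonal matrix `d̃` of the `d`-blocks of a multiple colligation. -/
noncomputable def dT {k : ℕ} {A I : Type*}
    (g : Fin k → Matrix (A ⊕ I) (A ⊕ I) ℂ) : Matrix (I × Fin k) (I × Fin k) ℂ :=
  blockDiagonal fun j => (g j).toBlocks₂₂

/-- `S̃`: the Kronecker-type block matrix whose `(i,j)` block is `s_{ij} · 1`. -/
def sT {k : ℕ} (I : Type*) [DecidableEq I] (S : Matrix (Fin k) (Fin k) ℂ) :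
    Matrix (I × Fin k) (I × Fin k) ℂ :=
  Matrix.of fun p q => if p.1 = q.1 then S p.2 q.2 else 0

/-- The multivariate characteristic function `χ(𝔄; S) = ã + b̃·(S̃ − d̃)⁻¹·c̃`. -/
noncomputable def chiM {k : ℕ} {A I : Type*} [Fintype A] [Fintype I] [DecidableEq I]
    (g : Fin k → Matrix (A ⊕ I) (A ⊕ I) ℂ) (S : Matrix (Fin k) (Fin k) ℂ) :
    Matrix (A × Fin k) (A × Fin k) ℂ :=
  aT g + bT g * (sT I S - dT g)⁻¹ * cT g



open Kronecker in
lemma sT_eq {k : ℕ} (I : Type*) [DecidableEq I] [Fintype I] (S : Matrix (Fin k) (Fin k) ℂ) :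
    sT I S = (1 : Matrix I I ℂ) ⊗ₖ S := by
  ext ⟨i, p⟩ ⟨j, q⟩
  simp [sT, kroneckerMap_apply, one_apply, boole_mul]

lemma sT_one {k : ℕ} (I : Type*) [DecidableEq I] :
    sT I (1 : Matrix (Fin k) (Fin k) ℂ) = 1 := by
  ext ⟨i, p⟩ ⟨j, q⟩
  simp [sT, one_apply, Prod.ext_iff, ite_and]

lemma sT_mul {k : ℕ} (I : Type*) [DecidableEq I] [Fintype I]
    (A B : Matrix (Fin k) (Fin k) ℂ) :
    sT I (A * B) = sT I A * sT I B := by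
  rw [sT_eq, sT_eq, sT_eq, ← Matrix.mul_kronecker_mul, one_mul]

lemma sT_conjTranspose {k : ℕ} (I : Type*) [DecidableEq I]
    (A : Matrix (Fin k) (Fin k) ℂ) : sT I (Aᴴ) = (sT I A)ᴴ := by
  ext ⟨i, p⟩ ⟨j, q⟩
  simp only [sT, conjTranspose_apply, of_apply, apply_ite star, star_zero]
  simp [eq_comm]

lemma unitary_blocks {n m : Type*} [Fintype n] [Fintype m] [DecidableEq n] [DecidableEq m]
    (M : Matrix (n ⊕ m) (n ⊕ m) ℂ) (hM : M ∈ Matrix.unitaryGroup (n ⊕ m) ℂ) :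
    M.toBlocks₁₁ * M.toBlocks₁₁ᴴ + M.toBlocks₁₂ * M.toBlocks₁₂ᴴ = 1 ∧
    M.toBlocks₁₁ * M.toBlocks₂₁ᴴ + M.toBlocks₁₂ * M.toBlocks₂₂ᴴ = 0 ∧
    M.toBlocks₂₁ * M.toBlocks₁₁ᴴ + M.toBlocks₂₂ * M.toBlocks₁₂ᴴ = 0 ∧
    M.toBlocks₂₁ * M.toBlocks₂₁ᴴ + M.toBlocks₂₂ * M.toBlocks₂₂ᴴ = 1 := by
  have h1 : M * Mᴴ = 1 := by
    have := (Matrix.mem_unitaryGroup_iff).mp hM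
    rwa [star_eq_conjTranspose] at this
  have h2 : fromBlocks
      (M.toBlocks₁₁ * M.toBlocks₁₁ᴴ + M.toBlocks₁₂ * M.toBlocks₁₂ᴴ)
      (M.toBlocks₁₁ * M.toBlocks₂₁ᴴ + M.toBlocks₁₂ * M.toBlocks₂₂ᴴ)
      (M.toBlocks₂₁ * M.toBlocks₁₁ᴴ + M.toBlocks₂₂ * M.toBlocks₁₂ᴴ)
      (M.toBlocks₂₁ * M.toBlocks₂₁ᴴ + M.toBlocks₂₂ * M.toBlocks₂₂ᴴ)
      = fromBlocks 1 0 0 1 := by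
    rw [← Matrix.fromBlocks_multiply, ← Matrix.fromBlocks_conjTranspose,
      Matrix.fromBlocks_toBlocks, h1, Matrix.fromBlocks_one]
  rw [Matrix.fromBlocks_inj] at h2
  exact h2

/-- the Riemann–Schwarz type identity for the multivariate characteristic
function of a multiple colligation of unitary matrices:
`χ(𝔄; (S*)⁻¹) · χ(𝔄; S)* = 1`. -/
theorem chiM_schwarz {α N k : ℕ}
    (g : Fin k → Matrix (Fin α ⊕ Fin N) (Fin α ⊕ Fin N) ℂ)
    (hg : ∀ j, g j ∈ Matrix.unitaryGroup (Fin α ⊕ Fin N) ℂ)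
    (S : Matrix (Fin k) (Fin k) ℂ) (hS : IsUnit S)
    (hinv : IsUnit (sT (Fin N) S - dT g))
    (hinv' : IsUnit (sT (Fin N) (Sᴴ)⁻¹ - dT g)) :
    chiM g ((Sᴴ)⁻¹) * (chiM g S)ᴴ = 1 := by
  set a := aT g with ha
  set b := bT g with hb
  set c := cT g with hc
  set d := dT g with hd
  set T : Matrix (Fin k) (Fin k) ℂ := (Sᴴ)⁻¹ with hT
  set E : Matrix (Fin N × Fin k) (Fin N × Fin k) ℂ := sT (Fin N) T - d with hE
  set F : Matrix (Fin N × Fin k) (Fin N × Fin k) ℂ := sT (Fin N) S - d with hF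
  set X := E⁻¹ with hX
  set Y := (Fᴴ)⁻¹ with hY
  -- unitary relations at the block diagonal level
  have Haa : a * aᴴ + b * bᴴ = 1 := by
    simp only [ha, hb, hc, hd, aT, bT, cT, dT, blockDiagonal_conjTranspose,
      ← blockDiagonal_mul, ← blockDiagonal_add]
    rw [← blockDiagonal_one]
    refine congrArg _ (funext fun j => ?_)
    simpa using (unitary_blocks (g j) (hg j)).1
  have Hac : a * cᴴ + b * dᴴ = 0 := by
    simp only [ha, hb, hc, hd, aT, bT, cT, dT, blockDiagonal_conjTranspose,
      ← blockDiagonal_mul, ← blockDiagonal_add]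
    rw [← blockDiagonal_zero]
    refine congrArg _ (funext fun j => ?_)
    simpa using (unitary_blocks (g j) (hg j)).2.1
  have Hca : c * aᴴ + d * bᴴ = 0 := by
    simp only [ha, hb, hc, hd, aT, bT, cT, dT, blockDiagonal_conjTranspose,
      ← blockDiagonal_mul, ← blockDiagonal_add]
    rw [← blockDiagonal_zero]
    refine congrArg _ (funext fun j => ?_)
    simpa using (unitary_blocks (g j) (hg j)).2.2.1
  have Hcc : c * cᴴ + d * dᴴ = 1 := by
    simp only [ha, hb, hc, hd, aT, bT, cT, dT, blockDiagonal_conjTranspose,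
      ← blockDiagonal_mul, ← blockDiagonal_add]
    rw [← blockDiagonal_one]
    refine congrArg _ (funext fun j => ?_)
    simpa using (unitary_blocks (g j) (hg j)).2.2.2
  -- invertibility facts
  have hEdet : IsUnit E.det := (Matrix.isUnit_iff_isUnit_det E).mp hinv'
  have hFdet : IsUnit F.det := (Matrix.isUnit_iff_isUnit_det F).mp hinv
  have hFHdet : IsUnit (Fᴴ).det := by
    rw [Matrix.det_conjTranspose]; exact isUnit_star.mpr hFdet
  have hXE : X * E = 1 := Matrix.nonsing_inv_mul E hEdet
  have hFY : Fᴴ * Y = 1 := Matrix.mul_nonsing_inv (Fᴴ) hFHdet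
  -- the Kronecker identity T̃ * S̃ᴴ = 1
  have hTS : sT (Fin N) T * (sT (Fin N) S)ᴴ = 1 := by
    rw [← sT_conjTranspose, ← sT_mul, hT]
    have hSdet : IsUnit (Sᴴ).det := by
      rw [Matrix.det_conjTranspose]
      exact isUnit_star.mpr ((Matrix.isUnit_iff_isUnit_det S).mp hS)
    rw [Matrix.nonsing_inv_mul (Sᴴ) hSdet, sT_one]
  -- the key identity
  have key : X * (1 - d * dᴴ) * Y = 1 + dᴴ * Y + X * d := by
    have h1 : (1 : Matrix (Fin N × Fin k) (Fin N × Fin k) ℂ) - d * dᴴ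
        = E * Fᴴ + E * dᴴ + d * Fᴴ := by
      have h0 : Fᴴ = (sT (Fin N) S)ᴴ - dᴴ := by rw [hF, conjTranspose_sub]
      rw [h0, hE, ← hTS]
      noncomm_ring
    calc X * (1 - d * dᴴ) * Y = X * (E * Fᴴ + E * dᴴ + d * Fᴴ) * Y := by rw [h1]
      _ = (X * E) * (Fᴴ * Y) + (X * E) * dᴴ * Y + X * d * (Fᴴ * Y) := by
          simp only [Matrix.mul_add, Matrix.add_mul, Matrix.mul_assoc]
      _ = 1 + dᴴ * Y + X * d := by
          rw [hXE, hFY]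
          simp only [Matrix.one_mul, Matrix.mul_one]
  -- rearranged unitarity relations
  have Haa' : a * aᴴ = 1 - b * bᴴ := by rw [eq_sub_iff_add_eq]; exact Haa
  have Hac' : a * cᴴ = -(b * dᴴ) := by rw [eq_neg_iff_add_eq_zero]; exact Hac
  have Hca' : c * aᴴ = -(d * bᴴ) := by rw [eq_neg_iff_add_eq_zero]; exact Hca
  have Hcc' : c * cᴴ = 1 - d * dᴴ := by rw [eq_sub_iff_add_eq]; exact Hcc
  -- expand the characteristic functions
  have hchiT : chiM g T = a + b * X * c := rfl
  have hchiS : (chiM g S)ᴴ = aᴴ + cᴴ * (Y * bᴴ) := by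
    simp only [chiM, ← ha, ← hb, ← hc, ← hd, ← hF, conjTranspose_add,
      conjTranspose_mul, Matrix.conjTranspose_nonsing_inv, ← hY, Matrix.mul_assoc]
  -- helper equalities, all right-associated
  have e1 : a * (cᴴ * (Y * bᴴ)) = -(b * (dᴴ * (Y * bᴴ))) := by
    calc a * (cᴴ * (Y * bᴴ)) = (a * cᴴ) * (Y * bᴴ) := by rw [Matrix.mul_assoc]
      _ = -(b * (dᴴ * (Y * bᴴ))) := by rw [Hac', Matrix.neg_mul, Matrix.mul_assoc]
  have e2 : b * (X * (c * aᴴ)) = -(b * (X * (d * bᴴ))) := by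
    rw [Hca']
    simp only [Matrix.mul_neg]
  have h3 : X * (c * (cᴴ * (Y * bᴴ))) = bᴴ + dᴴ * (Y * bᴴ) + X * (d * bᴴ) := by
    calc X * (c * (cᴴ * (Y * bᴴ))) = (X * (c * cᴴ) * Y) * bᴴ := by
          simp only [Matrix.mul_assoc]
      _ = (X * (1 - d * dᴴ) * Y) * bᴴ := by rw [Hcc']
      _ = (1 + dᴴ * Y + X * d) * bᴴ := by rw [key]
      _ = bᴴ + dᴴ * (Y * bᴴ) + X * (d * bᴴ) := by
          simp only [Matrix.add_mul, Matrix.one_mul, Matrix.mul_assoc]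
  have e3 : b * (X * (c * (cᴴ * (Y * bᴴ))))
      = b * bᴴ + b * (dᴴ * (Y * bᴴ)) + b * (X * (d * bᴴ)) := by
    rw [h3]
    simp only [Matrix.mul_add]
  rw [hchiT, hchiS]
  simp only [Matrix.add_mul, Matrix.mul_add, Matrix.mul_assoc]
  rw [Haa', e1, e2, e3]
  abel
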